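/- Let ℓ_z for z ∈ M_k each be L-smooth and convex with average f_k, let f be differentiable with minimizer x* (∇f(x*) = 0), and suppose f - f_k is c-restricted smooth w.r.t. x*. Then for any y⁰, the average over z ∈ M_k of ‖∇ℓ_z(x*) - ∇ℓ_z(y⁰) + ∇f(y⁰)‖² is at most 4L·(f(y⁰) - f(x*)) + c(4L + 2c)·‖y⁰ - x*‖². -/

import Mathlib

open InnerProductSpace

variable {d : ℕ}
local notation "E" => EuclideanSpace ℝ (Fin d)

lemma line_hasDerivAt (φ : E → ℝ) (hφ : Differentiable ℝ φ) (x v : E) (t : ℝ) :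
    HasDerivAt (fun s : ℝ => φ (x + s • v)) ⟪gradient φ (x + t • v), v⟫_ℝ t := by
  have hcurve : HasDerivAt (fun s : ℝ => x + s • v) v t := by
    simpa using ((hasDerivAt_id t).smul_const v).const_add x
  have hF : HasFDerivAt φ ((toDual ℝ E) (gradient φ (x + t • v))) (x + t • v) :=
    (hφ (x + t • v)).hasGradientAt.hasFDerivAt
  have h := hF.comp_hasDerivAt t hcurve
  rw [toDual_apply_apply] at h
  exact h

lemma grad_inner (g : E) (u : E) : HasGradientAt (fun w : E => ⟪g, w⟫_ℝ) g u := by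
  rw [hasGradientAt_iff_hasFDerivAt]
  have : (fun w : E => ⟪g, w⟫_ℝ) = ⇑((toDual ℝ E) g) := by
    funext w; simp [toDual_apply_apply]
  rw [this]  -- goal: HasFDerivAt ⇑(toDual ℝ E g) (toDual ℝ E g) u
  exact ((toDual ℝ E) g).hasFDerivAt

lemma convex_subgrad (φ : E → ℝ) (hconv : ConvexOn ℝ Set.univ φ) (hφ : Differentiable ℝ φ)
    (x y : E) : φ x + ⟪gradient φ x, y - x⟫_ℝ ≤ φ y := by
  have hχ : ConvexOn ℝ Set.univ (fun s : ℝ => φ (x + s • (y - x))) := by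
    have := hconv.comp_affineMap (AffineMap.lineMap x y : ℝ →ᵃ[ℝ] E)
    simp only [Set.preimage_univ] at this
    refine this.congr ?_
    intro s _
    simp [Function.comp, AffineMap.lineMap_apply, add_comm]
  have hd : HasDerivAt (fun s : ℝ => φ (x + s • (y - x)))
      ⟪gradient φ (x + (0:ℝ) • (y - x)), y - x⟫_ℝ 0 := line_hasDerivAt φ hφ x (y - x) 0
  rw [zero_smul, add_zero] at hd
  have h2 := hχ.le_slope_of_hasDerivAt (Set.mem_univ 0) (Set.mem_univ 1) one_pos hd
  rw [slope_def_field] at h2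
  rw [one_smul, zero_smul, add_zero, add_sub_cancel, sub_zero, div_one] at h2
  linarith

lemma descent_lemma (φ : E → ℝ) (hφ : Differentiable ℝ φ) (K : ℝ)
    (hlip : ∀ u v, ‖gradient φ u - gradient φ v‖ ≤ K * ‖u - v‖) (x y : E) :
    φ y ≤ φ x + ⟪gradient φ x, y - x⟫_ℝ + K / 2 * ‖y - x‖ ^ 2 := by
  set v := y - x with hv
  set A := ⟪gradient φ x, v⟫_ℝ with hA
  set h : ℝ → ℝ := fun t => φ x + t * A + K / 2 * t ^ 2 * ‖v‖ ^ 2 - φ (x + t • v) with hh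
  have hH : ∀ t : ℝ, HasDerivAt h (A + K * t * ‖v‖ ^ 2 - ⟪gradient φ (x + t • v), v⟫_ℝ) t := by
    intro t
    have h1 : HasDerivAt (fun t : ℝ => φ x + t * A + K / 2 * t ^ 2 * ‖v‖ ^ 2)
        (A + K * t * ‖v‖ ^ 2) t := by
      have ha : HasDerivAt (fun t : ℝ => t * A) A t := by
        simpa using (hasDerivAt_id t).mul_const A
      have hb : HasDerivAt (fun t : ℝ => K / 2 * t ^ 2 * ‖v‖ ^ 2) (K * t * ‖v‖ ^ 2) t := by
        have := ((hasDerivAt_pow 2 t).const_mul (K / 2)).mul_const (‖v‖ ^ 2)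
        refine this.congr_deriv ?_
        ring
      refine (((hasDerivAt_const t (φ x)).add ha).add hb).congr_deriv ?_
      ring
    exact h1.sub (line_hasDerivAt φ hφ x v t)
  have hmono : MonotoneOn h (Set.Icc 0 1) := by
    apply monotoneOn_of_deriv_nonneg (convex_Icc 0 1)
    · exact fun t _ => ((hH t).differentiableAt.continuousAt).continuousWithinAt
    · exact fun t _ => ((hH t).differentiableAt).differentiableWithinAt
    · intro t ht
      rw [interior_Icc] at ht
      rw [(hH t).deriv]
      have key : ⟪gradient φ (x + t • v), v⟫_ℝ - A ≤ K * t * ‖v‖ ^ 2 := by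
        have h1 : ⟪gradient φ (x + t • v), v⟫_ℝ - A = ⟪gradient φ (x + t • v) - gradient φ x, v⟫_ℝ := by
          rw [inner_sub_left]
        have h2 : ⟪gradient φ (x + t • v) - gradient φ x, v⟫_ℝ ≤
            ‖gradient φ (x + t • v) - gradient φ x‖ * ‖v‖ := real_inner_le_norm _ _
        have h3 : ‖gradient φ (x + t • v) - gradient φ x‖ ≤ K * ‖t • v‖ := by
          simpa using hlip (x + t • v) x
        have h4 : ‖t • v‖ = t * ‖v‖ := by
          rw [norm_smul, Real.norm_eq_abs, abs_of_pos ht.1]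
        have h5 := mul_le_mul_of_nonneg_right h3 (norm_nonneg v)
        rw [h4] at h5
        rw [h1]
        calc ⟪gradient φ (x + t • v) - gradient φ x, v⟫_ℝ
            ≤ ‖gradient φ (x + t • v) - gradient φ x‖ * ‖v‖ := h2
          _ ≤ K * (t * ‖v‖) * ‖v‖ := h5
          _ = K * t * ‖v‖ ^ 2 := by ring
      linarith
  have h01 := hmono (Set.mem_Icc.2 ⟨le_refl 0, zero_le_one⟩) (Set.mem_Icc.2 ⟨zero_le_one, le_refl 1⟩) zero_le_one
  simp only [hh] at h01
  rw [zero_smul, add_zero, one_smul] at h01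
  have hxy : x + v = y := by rw [hv]; abel
  rw [hxy] at h01
  nlinarith [h01]

lemma hasGrad_sub_inner (φ : E → ℝ) (hφ : Differentiable ℝ φ) (g : E) (u : E) :
    HasGradientAt (fun w => φ w - ⟪g, w⟫_ℝ) (gradient φ u - g) u := by
  rw [hasGradientAt_iff_hasFDerivAt, map_sub]
  exact ((hφ u).hasGradientAt.hasFDerivAt).sub ((grad_inner g u).hasFDerivAt)

lemma cocoercive (φ : E → ℝ) (hconv : ConvexOn ℝ Set.univ φ) (hφ : Differentiable ℝ φ)
    (K : ℝ) (hK : 0 < K) (hlip : ∀ u v, ‖gradient φ u - gradient φ v‖ ≤ K * ‖u - v‖)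
    (x y : E) :
    ‖gradient φ x - gradient φ y‖ ^ 2 ≤ 2 * K * (φ y - φ x - ⟪gradient φ x, y - x⟫_ℝ) := by
  set g := gradient φ x with hg
  set ψ : E → ℝ := fun w => φ w - ⟪g, w⟫_ℝ with hψ
  have hψd : Differentiable ℝ ψ := fun u => (hasGrad_sub_inner φ hφ g u).differentiableAt
  have hψg : ∀ u, gradient ψ u = gradient φ u - g := fun u =>
    (hasGrad_sub_inner φ hφ g u).gradient
  have hψlip : ∀ u v, ‖gradient ψ u - gradient ψ v‖ ≤ K * ‖u - v‖ := by
    intro u v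
    rw [hψg u, hψg v]
    simpa using hlip u v
  set w : E := y - (1 / K) • gradient ψ y with hw
  have hd := descent_lemma ψ hψd K hψlip y w
  have hwy : w - y = -((1 / K) • gradient ψ y) := by rw [hw]; abel
  have e1 : ⟪gradient ψ y, w - y⟫_ℝ = -(1 / K) * ‖gradient ψ y‖ ^ 2 := by
    rw [hwy, inner_neg_right, real_inner_smul_right, real_inner_self_eq_norm_sq]
    ring
  have e2 : ‖w - y‖ ^ 2 = (1 / K) ^ 2 * ‖gradient ψ y‖ ^ 2 := by
    rw [hwy, norm_neg, norm_smul, mul_pow, Real.norm_eq_abs, sq_abs]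
  have hmin : ψ x ≤ ψ w := by
    have h1 := convex_subgrad φ hconv hφ x w
    have h2 : ⟪g, w - x⟫_ℝ = ⟪g, w⟫_ℝ - ⟪g, x⟫_ℝ := inner_sub_right _ _ _
    simp only [hψ]
    rw [← hg] at h1
    linarith
  rw [e1, e2] at hd
  set G := ‖gradient ψ y‖ ^ 2 with hG
  have hGnn : 0 ≤ G := by positivity
  have key : G ≤ 2 * K * (ψ y - ψ x) := by
    have hK' : K ≠ 0 := ne_of_gt hK
    have e3 : -(1 / K) * G + K / 2 * ((1 / K) ^ 2 * G) = -(1 / (2 * K)) * G := by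
      field_simp; ring
    clear_value g ψ w G
    have h6 : 1 / (2 * K) * G ≤ ψ y - ψ x := by linarith [hd, hmin, e3]
    calc G = 2 * K * (1 / (2 * K) * G) := by field_simp
      _ ≤ 2 * K * (ψ y - ψ x) := by
          apply mul_le_mul_of_nonneg_left h6; positivity
  have eG : G = ‖gradient φ x - gradient φ y‖ ^ 2 := by
    rw [hG, hψg y, ← hg, norm_sub_rev]
  have eψ : ψ y - ψ x = φ y - φ x - ⟪g, y - x⟫_ℝ := by
    simp only [hψ]
    rw [inner_sub_right]
    ring
  rw [eG, eψ] at key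
  exact key

lemma taylor_lower (g : E → ℝ) (hg : Differentiable ℝ g) (c : ℝ) (hc : 0 ≤ c) (x y : E)
    (hr : ∀ w, ‖gradient g x - gradient g w‖ ≤ c * ‖x - w‖) :
    g x + ⟪gradient g x, y - x⟫_ℝ - c * ‖y - x‖ ^ 2 ≤ g y := by
  set u := y - x with hu
  set A := ⟪gradient g x, u⟫_ℝ with hA
  set h : ℝ → ℝ := fun t => g (x + t • u) - t * A + c * ‖u‖ ^ 2 * t with hh
  have hH : ∀ t : ℝ, HasDerivAt h (⟪gradient g (x + t • u), u⟫_ℝ - A + c * ‖u‖ ^ 2) t := by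
    intro t
    have h1 : HasDerivAt (fun t : ℝ => t * A) A t := by
      simpa using (hasDerivAt_id t).mul_const A
    have h2 : HasDerivAt (fun t : ℝ => c * ‖u‖ ^ 2 * t) (c * ‖u‖ ^ 2) t := by
      simpa using (hasDerivAt_id t).const_mul (c * ‖u‖ ^ 2)
    exact ((line_hasDerivAt g hg x u t).sub h1).add h2
  have hmono : MonotoneOn h (Set.Icc 0 1) := by
    apply monotoneOn_of_deriv_nonneg (convex_Icc 0 1)
    · exact fun t _ => ((hH t).differentiableAt.continuousAt).continuousWithinAt
    · exact fun t _ => ((hH t).differentiableAt).differentiableWithinAt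
    · intro t ht
      rw [interior_Icc] at ht
      rw [(hH t).deriv]
      have h1 : A - ⟪gradient g (x + t • u), u⟫_ℝ
          = ⟪gradient g x - gradient g (x + t • u), u⟫_ℝ := by rw [inner_sub_left]
      have h2 : ⟪gradient g x - gradient g (x + t • u), u⟫_ℝ ≤
          ‖gradient g x - gradient g (x + t • u)‖ * ‖u‖ := real_inner_le_norm _ _
      have h3 : ‖gradient g x - gradient g (x + t • u)‖ ≤ c * ‖t • u‖ := by
        simpa using hr (x + t • u)
      have h4 : ‖t • u‖ = t * ‖u‖ := by
        rw [norm_smul, Real.norm_eq_abs, abs_of_pos ht.1]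
      have h5 := mul_le_mul_of_nonneg_right h3 (norm_nonneg u)
      rw [h4] at h5
      have h6 : A - ⟪gradient g (x + t • u), u⟫_ℝ ≤ c * ‖u‖ ^ 2 := by
        rw [h1]
        calc ⟪gradient g x - gradient g (x + t • u), u⟫_ℝ
            ≤ ‖gradient g x - gradient g (x + t • u)‖ * ‖u‖ := h2
          _ ≤ c * (t * ‖u‖) * ‖u‖ := h5
          _ ≤ c * ‖u‖ ^ 2 := by
              nlinarith [mul_nonneg (mul_nonneg hc (sub_nonneg.2 ht.2.le)) (sq_nonneg (‖u‖))]
      linarith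
  have h01 := hmono (Set.mem_Icc.2 ⟨le_refl 0, zero_le_one⟩)
    (Set.mem_Icc.2 ⟨zero_le_one, le_refl 1⟩) zero_le_one
  simp only [hh] at h01
  rw [zero_smul, add_zero, one_smul] at h01
  have hxy : x + u = y := by rw [hu]; abel
  rw [hxy] at h01
  nlinarith [h01]

set_option maxHeartbeats 2000000 in
/-- second supply-rate bound of Lemma 2 (SVRG variance term). -/
theorem statement6 {d : ℕ} {ι : Type*} (M : Finset ι) (hM : M.Nonempty)
    (ℓ : ι → EuclideanSpace ℝ (Fin d) → ℝ) (L c : ℝ) (hL : 0 ≤ L) (hc : 0 ≤ c)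
    (hdiff : ∀ z ∈ M, Differentiable ℝ (ℓ z))
    (hconv : ∀ z ∈ M, ConvexOn ℝ Set.univ (ℓ z))
    (hlip : ∀ z ∈ M, LipschitzWith L.toNNReal (gradient (ℓ z)))
    (f fk : EuclideanSpace ℝ (Fin d) → ℝ)
    (hfk : ∀ x, fk x = (∑ z ∈ M, ℓ z x) / M.card)
    (hf : Differentiable ℝ f) (hfkd : Differentiable ℝ fk)
    (xstar : EuclideanSpace ℝ (Fin d)) (hgrad0 : gradient f xstar = 0)
    (hr : ∀ y, ‖gradient (fun x => f x - fk x) xstar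
        - gradient (fun x => f x - fk x) y‖ ≤ c * ‖xstar - y‖)
    (y0 : EuclideanSpace ℝ (Fin d)) :
    (∑ z ∈ M, ‖gradient (ℓ z) xstar - gradient (ℓ z) y0 + gradient f y0‖ ^ 2) / M.card ≤
      4 * L * (f y0 - f xstar) + c * (4 * L + 2 * c) * ‖y0 - xstar‖ ^ 2 := by
  classical
  set n : ℝ := (M.card : ℝ) with hn'
  have hn : 0 < n := by
    simp only [hn', Nat.cast_pos]
    exact Finset.card_pos.mpr hM
  have hlip' : ∀ z ∈ M, ∀ p q : EuclideanSpace ℝ (Fin d),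
      ‖gradient (ℓ z) p - gradient (ℓ z) q‖ ≤ L * ‖p - q‖ := by
    intro z hz p q
    have := (hlip z hz).dist_le_mul p q
    rwa [dist_eq_norm, dist_eq_norm, Real.coe_toNNReal L hL] at this
  have hfkgrad : ∀ p : EuclideanSpace ℝ (Fin d),
      HasGradientAt fk (n⁻¹ • ∑ z ∈ M, gradient (ℓ z) p) p := by
    intro p
    have hfk' : fk = fun x => n⁻¹ * ∑ z ∈ M, ℓ z x := by
      funext x; rw [hfk x, div_eq_inv_mul]
    rw [hasGradientAt_iff_hasFDerivAt, map_smul, map_sum, hfk']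
    exact (HasFDerivAt.fun_sum (fun z hz => ((hdiff z hz) p).hasGradientAt.hasFDerivAt)).const_mul n⁻¹
  have hsum_at : ∀ p : EuclideanSpace ℝ (Fin d),
      ∑ z ∈ M, gradient (ℓ z) p = n • gradient fk p := by
    intro p
    rw [(hfkgrad p).gradient, smul_inv_smul₀ (ne_of_gt hn)]
  have hsumf : ∀ p : EuclideanSpace ℝ (Fin d), ∑ z ∈ M, ℓ z p = n * fk p := by
    intro p
    rw [hfk p]
    field_simp
  have hgsub : ∀ p, gradient (fun x => f x - fk x) p = gradient f p - gradient fk p := by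
    intro p
    have h : HasGradientAt (fun x => f x - fk x) (gradient f p - gradient fk p) p := by
      rw [hasGradientAt_iff_hasFDerivAt, map_sub]
      exact ((hf p).hasGradientAt.hasFDerivAt).sub ((hfkd p).hasGradientAt.hasFDerivAt)
    exact h.gradient
  set gfx := gradient fk xstar with hgfx
  set gfy := gradient fk y0 with hgfy
  set v := gradient f y0 with hv
  set u := y0 - xstar with hu
  set b := gfy - gfx - v with hbdef
  have hb : ‖b‖ ≤ c * ‖u‖ := by
    have h := hr y0
    rw [hgsub xstar, hgsub y0, hgrad0] at h
    rw [← hgfx, ← hgfy, ← hv] at h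
    have e : (0 : EuclideanSpace ℝ (Fin d)) - gfx - (v - gfy) = b := by
      rw [hbdef]; abel
    rw [e] at h
    rwa [norm_sub_rev xstar y0] at h
  have hz1 : ∀ z ∈ M, ‖gradient (ℓ z) xstar - gradient (ℓ z) y0‖ ^ 2 ≤
      2 * L * (ℓ z y0 - ℓ z xstar - ⟪gradient (ℓ z) xstar, u⟫_ℝ) := by
    intro z hz
    rcases eq_or_lt_of_le hL with hL0 | hLpos
    · have h := hlip' z hz xstar y0
      rw [← hL0, zero_mul] at h
      have h1 : ‖gradient (ℓ z) xstar - gradient (ℓ z) y0‖ = 0 :=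
        le_antisymm h (norm_nonneg _)
      rw [h1, ← hL0]
      norm_num
    · have := cocoercive (ℓ z) (hconv z hz) (hdiff z hz) L hLpos (hlip' z hz) xstar y0
      rw [← hu] at this
      exact this
  have hzc : ∀ z ∈ M, ℓ z xstar + ⟪gradient (ℓ z) xstar, u⟫_ℝ ≤ ℓ z y0 := by
    intro z hz
    have := convex_subgrad (ℓ z) (hconv z hz) (hdiff z hz) xstar y0
    rw [← hu] at this
    exact this
  have hsx : ∑ z ∈ M, gradient (ℓ z) xstar = n • gfx := hsum_at xstar
  have hsy : ∑ z ∈ M, gradient (ℓ z) y0 = n • gfy := hsum_at y0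
  have hinX : ∑ z ∈ M, ⟪gradient (ℓ z) xstar, u⟫_ℝ = n * ⟪gfx, u⟫_ℝ := by
    rw [← sum_inner, hsx, real_inner_smul_left]
  have hD0 : 0 ≤ fk y0 - fk xstar - ⟪gfx, u⟫_ℝ := by
    have h := Finset.sum_le_sum hzc
    rw [Finset.sum_add_distrib, hinX, hsumf xstar, hsumf y0] at h
    have h' : n * 0 ≤ n * (fk y0 - fk xstar - ⟪gfx, u⟫_ℝ) := by nlinarith [h]
    exact le_of_mul_le_mul_left h' hn
  have hgdiff : Differentiable ℝ (fun x => f x - fk x) := hf.sub hfkd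
  have hgrx : gradient (fun x => f x - fk x) xstar = -gfx := by
    rw [hgsub xstar, hgrad0, zero_sub]
  have htl := taylor_lower (fun x => f x - fk x) hgdiff c hc xstar y0 hr
  rw [hgrx, ← hu] at htl
  have hinneg : ⟪-gfx, u⟫_ℝ = -⟪gfx, u⟫_ℝ := by
    rw [inner_neg_left]
  rw [hinneg] at htl
  have htl' : f xstar - fk xstar + -⟪gfx, u⟫_ℝ - c * ‖u‖ ^ 2 ≤ f y0 - fk y0 := htl
  have hDle : fk y0 - fk xstar - ⟪gfx, u⟫_ℝ ≤ (f y0 - f xstar) + c * ‖u‖ ^ 2 := by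
    linarith [htl']
  have hT : ∑ z ∈ M, ‖gradient (ℓ z) xstar - gradient (ℓ z) y0‖ ^ 2 ≤
      2 * L * n * (fk y0 - fk xstar - ⟪gfx, u⟫_ℝ) := by
    calc ∑ z ∈ M, ‖gradient (ℓ z) xstar - gradient (ℓ z) y0‖ ^ 2
        ≤ ∑ z ∈ M, 2 * L * (ℓ z y0 - ℓ z xstar - ⟪gradient (ℓ z) xstar, u⟫_ℝ) :=
          Finset.sum_le_sum hz1
      _ = 2 * L * (∑ z ∈ M, ℓ z y0 - ∑ z ∈ M, ℓ z xstar
            - ∑ z ∈ M, ⟪gradient (ℓ z) xstar, u⟫_ℝ) := by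
          rw [← Finset.mul_sum, Finset.sum_sub_distrib, Finset.sum_sub_distrib]
      _ = 2 * L * n * (fk y0 - fk xstar - ⟪gfx, u⟫_ℝ) := by
          rw [hsumf y0, hsumf xstar, hinX]; ring
  have hS1 : ∑ z ∈ M, ‖gradient (ℓ z) xstar - gradient (ℓ z) y0 + v‖ ^ 2
      = ∑ z ∈ M, ‖gradient (ℓ z) xstar - gradient (ℓ z) y0‖ ^ 2
        - 2 * n * ⟪b, v⟫_ℝ - n * ‖v‖ ^ 2 := by
    have e1 : ∀ z ∈ M, ‖gradient (ℓ z) xstar - gradient (ℓ z) y0 + v‖ ^ 2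
        = ‖gradient (ℓ z) xstar - gradient (ℓ z) y0‖ ^ 2
          + 2 * ⟪gradient (ℓ z) xstar - gradient (ℓ z) y0, v⟫_ℝ + ‖v‖ ^ 2 :=
      fun z _ => norm_add_sq_real _ _
    rw [Finset.sum_congr rfl e1, Finset.sum_add_distrib, Finset.sum_add_distrib,
      ← Finset.mul_sum, ← sum_inner, Finset.sum_const, Finset.sum_sub_distrib, hsx, hsy]
    have e2 : ⟪n • gfx - n • gfy, v⟫_ℝ = n * (-⟪b, v⟫_ℝ - ‖v‖ ^ 2) := by
      rw [← smul_sub, real_inner_smul_left]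
      have e3 : gfx - gfy = -b - v := by rw [hbdef]; abel
      rw [e3, inner_sub_left, inner_neg_left, real_inner_self_eq_norm_sq]
    rw [e2]
    have e4 : (M.card : ℕ) • ‖v‖ ^ 2 = n * ‖v‖ ^ 2 := by
      rw [nsmul_eq_mul, hn']
    rw [e4]
    ring
  have hbv : -2 * ⟪b, v⟫_ℝ - ‖v‖ ^ 2 ≤ ‖b‖ ^ 2 := by
    linarith [norm_add_sq_real b v, sq_nonneg ‖b + v‖]
  have hbsq : ‖b‖ ^ 2 ≤ c ^ 2 * ‖u‖ ^ 2 := by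
    calc ‖b‖ ^ 2 ≤ (c * ‖u‖) ^ 2 := pow_le_pow_left₀ (norm_nonneg b) hb 2
      _ = c ^ 2 * ‖u‖ ^ 2 := by ring
  rw [div_le_iff₀ hn, hS1]
  have p1 : n * (-2 * ⟪b, v⟫_ℝ - ‖v‖ ^ 2) ≤ n * ‖b‖ ^ 2 :=
    mul_le_mul_of_nonneg_left hbv hn.le
  have p2 : n * ‖b‖ ^ 2 ≤ n * (c ^ 2 * ‖u‖ ^ 2) :=
    mul_le_mul_of_nonneg_left hbsq hn.le
  have h2Ln : 0 ≤ 2 * L * n := mul_nonneg (mul_nonneg (by norm_num) hL) hn.le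
  have p3 : 2 * L * n * (fk y0 - fk xstar - ⟪gfx, u⟫_ℝ)
      ≤ 2 * L * n * ((f y0 - f xstar) + c * ‖u‖ ^ 2) :=
    mul_le_mul_of_nonneg_left hDle h2Ln
  have p4 : 0 ≤ 2 * L * n * ((f y0 - f xstar) + c * ‖u‖ ^ 2) :=
    le_trans (mul_nonneg h2Ln hD0) p3
  have p5 : 0 ≤ c ^ 2 * ‖u‖ ^ 2 * n := mul_nonneg (mul_nonneg (sq_nonneg c) (sq_nonneg _)) hn.le
  nlinarith [hT, p1, p2, p3, p4, p5]
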